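/- Under the SPDHG setup, assume g and all f_i are convex, θ = 1, the samplings 𝕊^{(k)} are i.i.d. copies of a proper sampling 𝕊, and the step size operators T, S are chosen so that there exist ESO parameters {v_i} of S^{1/2} A T^{1/2} with respect to 𝕊 satisfying v_i < p_i for all i = 1,…,n. Let w♯ = (x♯, y♯) be any saddle point, h(w) = g(x) + f*(y) and q = (−A* y♯, A x♯) ∈ ∂h(w♯). Then the Bregman distance between the SPDHG iterates w^{(k)} = (x^{(k)}, y^{(k)}) and w♯ converges to zero almost surely: D_h^q(w^{(k)}, w♯) → 0 a.s. -/

import Mathlib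

open scoped RealInnerProductSpace
open MeasureTheory

/-- A history of `k` sampled subsets of `{1,…,n}` (the sets `𝕊^{(1)},…,𝕊^{(k)}`). -/
abbrev Hist (n k : ℕ) := Fin k → Finset (Fin n)

/-- Restriction of a history of length `k+1` to its first `k` entries. -/
def histRes {n k : ℕ} (s : Hist n (k + 1)) : Hist n k := fun j => s j.castSucc

/-- Probability of a history, for i.i.d. samplings with distribution `P`. -/
noncomputable def histProb {n : ℕ} (P : Finset (Fin n) → ℝ) {k : ℕ} (s : Hist n k) : ℝ :=
  ∏ j, P (s j)

/-- Probability that index `i` belongs to the random set, for the sampling distribution `P`. -/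
noncomputable def probOf {n : ℕ} (P : Finset (Fin n) → ℝ) (i : Fin n) : ℝ :=
  ∑ R : Finset (Fin n), if i ∈ R then P R else 0

/-- `x` is the proximal point `prox_B^f(z)` for the step size operator `B` with inverse
`Binv`, i.e. the minimizer of `u ↦ ½‖u − z‖²_{B⁻¹} + f(u)`. -/
def IsProx {E : Type*} [NormedAddCommGroup E] [InnerProductSpace ℝ E]
    (Binv : E →L[ℝ] E) (f : E → ℝ) (z x : E) : Prop :=
  ∀ u : E, (1 / 2) * ⟪Binv (x - z), x - z⟫ + f x ≤ (1 / 2) * ⟪Binv (u - z), u - z⟫ + f u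

section SA
variable {E : Type*} [NormedAddCommGroup E] [InnerProductSpace ℝ E] [CompleteSpace E]

lemma sa_inner_comm (B : E →L[ℝ] E) (hB : IsSelfAdjoint B) (u v : E) :
    ⟪B u, v⟫ = ⟪B v, u⟫ := by
  have h := ContinuousLinearMap.isSelfAdjoint_iff'.mp hB
  conv_lhs => rw [← h, ContinuousLinearMap.adjoint_inner_left]
  exact real_inner_comm _ _

lemma sa_expand (B : E →L[ℝ] E) (hB : IsSelfAdjoint B) (a c : E) (t : ℝ) :
    ⟪B (a + t • c), a + t • c⟫ = ⟪B a, a⟫ + 2*t*⟪B a, c⟫ + t^2 * ⟪B c, c⟫ := by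
  have h := sa_inner_comm B hB c a
  simp only [map_add, ContinuousLinearMap.map_smul, inner_add_left, inner_add_right,
    real_inner_smul_left, real_inner_smul_right]
  rw [h]; ring

lemma sa_expand1 (B : E →L[ℝ] E) (hB : IsSelfAdjoint B) (a c : E) :
    ⟪B (a + c), a + c⟫ = ⟪B a, a⟫ + 2*⟪B a, c⟫ + ⟪B c, c⟫ := by
  have := sa_expand B hB a c 1
  simpa using this

lemma isProx_subgrad {B : E →L[ℝ] E} {f : E → ℝ} {z x : E}
    (hB : IsSelfAdjoint B) (hf : ConvexOn ℝ Set.univ f) (h : IsProx B f z x) (u : E) :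
    f x - f u ≤ ⟪B (x - z), u - x⟫ := by
  set c := u - x with hc
  have key : ∀ t : ℝ, 0 < t → t ≤ 1 → f x - f u ≤ ⟪B (x - z), c⟫ + t/2 * ⟪B c, c⟫ := by
    intro t ht ht1
    have hcvx : f ((1-t) • x + t • u) ≤ (1-t) * f x + t * f u :=
      hf.2 (Set.mem_univ x) (Set.mem_univ u) (by linarith) (le_of_lt ht) (by ring)
    have hpt : (1-t) • x + t • u = x + t • c := by
      rw [hc]; rw [smul_sub, sub_smul, one_smul]; abel
    rw [hpt] at hcvx
    have hprox := h (x + t • c)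
    have hz : x + t • c - z = (x - z) + t • c := by abel
    rw [hz, sa_expand B hB (x - z) c t] at hprox
    have hmul : t * (f x - f u) ≤ t * (⟪B (x - z), c⟫ + t/2 * ⟪B c, c⟫) := by nlinarith
    exact (mul_le_mul_iff_right₀ ht).mp hmul
  rcases le_or_gt ⟪B c, c⟫ 0 with hcc | hcc
  · have := key 1 one_pos le_rfl; linarith
  · by_contra hcon
    push_neg at hcon
    set ε := f x - f u - ⟪B (x - z), c⟫ with hε
    have hε0 : 0 < ε := by simp only [hε]; linarith
    have ht : 0 < min 1 (ε / ⟪B c, c⟫) := lt_min one_pos (div_pos hε0 hcc)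
    have hk := key _ ht (min_le_left _ _)
    have h2 : (min 1 (ε / ⟪B c, c⟫))/2 * ⟪B c, c⟫ ≤ ε/2 := by
      have hm := min_le_right 1 (ε / ⟪B c, c⟫)
      have : min 1 (ε / ⟪B c, c⟫) * ⟪B c, c⟫ ≤ (ε / ⟪B c, c⟫) * ⟪B c, c⟫ :=
        mul_le_mul_of_nonneg_right hm (le_of_lt hcc)
      rw [div_mul_cancel₀ _ (ne_of_gt hcc)] at this
      linarith
    simp only [hε] at h2 hk
    linarith

lemma isProx_strong {B : E →L[ℝ] E} {f : E → ℝ} {z x : E}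
    (hB : IsSelfAdjoint B) (hf : ConvexOn ℝ Set.univ f) (h : IsProx B f z x) (u : E) :
    f x + (1/2)*⟪B (x - z), x - z⟫ + (1/2)*⟪B (u - x), u - x⟫
      ≤ f u + (1/2)*⟪B (u - z), u - z⟫ := by
  have h1 := isProx_subgrad hB hf h u
  have h2 : ⟪B (u - z), u - z⟫
      = ⟪B (u - x), u - x⟫ + 2*⟪B (u - x), x - z⟫ + ⟪B (x - z), x - z⟫ := by
    have := sa_expand1 B hB (u - x) (x - z)
    rw [show u - x + (x - z) = u - z by abel] at this
    exact this
  have h3 : ⟪B (u - x), x - z⟫ = ⟪B (x - z), u - x⟫ := sa_inner_comm B hB _ _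
  linarith

lemma isProx_unique {B : E →L[ℝ] E} {f : E → ℝ} {z x1 x2 : E}
    (hB : IsSelfAdjoint B) (hBpos : ∀ u : E, u ≠ 0 → 0 < ⟪B u, u⟫)
    (hf : ConvexOn ℝ Set.univ f) (h1 : IsProx B f z x1) (h2 : IsProx B f z x2) : x1 = x2 := by
  have a1 := isProx_strong hB hf h1 x2
  have a2 := isProx_strong hB hf h2 x1
  have hsym : ⟪B (x1 - x2), x1 - x2⟫ = ⟪B (x2 - x1), x2 - x1⟫ := by
    rw [show x1 - x2 = -(x2 - x1) by abel, map_neg, inner_neg_neg]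
  by_contra hne
  have hpos := hBpos (x2 - x1) (sub_ne_zero.mpr (Ne.symm hne))
  linarith

end SA

section Hists
variable {n : ℕ} (P : Finset (Fin n) → ℝ)

lemma histRes_snoc {k : ℕ} (s : Hist n k) (R : Finset (Fin n)) :
    histRes (Fin.snoc s R) = s := by
  funext j; exact Fin.snoc_castSucc _ _ j

lemma histProb_snoc {k : ℕ} (s : Hist n k) (R : Finset (Fin n)) :
    histProb P (Fin.snoc s R) = histProb P s * P R := by
  rw [histProb, Fin.prod_univ_castSucc]
  simp [Fin.snoc_castSucc, Fin.snoc_last, histProb]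

def histSnocEquiv {n k : ℕ} : (Hist n k × Finset (Fin n)) ≃ Hist n (k+1) where
  toFun p := Fin.snoc p.1 p.2
  invFun t := (histRes t, t (Fin.last k))
  left_inv p := by
    refine Prod.ext ?_ ?_
    · exact histRes_snoc p.1 p.2
    · simp
  right_inv t := by
    funext j
    refine Fin.lastCases ?_ ?_ j
    · exact Fin.snoc_last _ _
    · intro i; exact Fin.snoc_castSucc _ _ i

lemma sum_hist_succ {M : Type*} [AddCommMonoid M] {k : ℕ} (G : Hist n (k+1) → M) :
    ∑ s : Hist n (k+1), G s = ∑ s : Hist n k, ∑ R : Finset (Fin n), G (Fin.snoc s R) := by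
  calc ∑ s : Hist n (k+1), G s
      = ∑ p : Hist n k × Finset (Fin n), G (Fin.snoc p.1 p.2) :=
        (Fintype.sum_equiv histSnocEquiv (fun p => G (Fin.snoc p.1 p.2)) G (fun p => rfl)).symm
    _ = _ := Fintype.sum_prod_type _

noncomputable def Ex (k : ℕ) (F : Hist n k → ℝ) : ℝ := ∑ s : Hist n k, histProb P s * F s

lemma Ex_step {k : ℕ} (F : Hist n (k+1) → ℝ) :
    Ex P (k+1) F = Ex P k (fun s => ∑ R, P R * F (Fin.snoc s R)) := by
  rw [Ex, Ex, sum_hist_succ (G := fun s => histProb P s * F s)]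
  refine Finset.sum_congr rfl (fun s _ => ?_)
  rw [Finset.mul_sum]
  exact Finset.sum_congr rfl (fun R _ => by rw [histProb_snoc]; ring)

lemma histProb_nonneg (hP0 : ∀ R, 0 ≤ P R) {k : ℕ} (s : Hist n k) : 0 ≤ histProb P s :=
  Finset.prod_nonneg (fun j _ => hP0 _)

lemma sum_histProb (hP1 : ∑ R : Finset (Fin n), P R = 1) :
    ∀ k : ℕ, ∑ s : Hist n k, histProb P s = 1 := by
  intro k
  induction k with
  | zero =>
    have h1 : ∀ s : Hist n 0, histProb P s = 1 := fun s => by simp [histProb]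
    rw [Finset.sum_congr rfl (fun s _ => h1 s)]
    simp
  | succ k ih =>
    rw [sum_hist_succ (G := histProb P)]
    calc ∑ s : Hist n k, ∑ R, histProb P (Fin.snoc s R)
        = ∑ s : Hist n k, histProb P s * ∑ R, P R := by
          refine Finset.sum_congr rfl (fun s _ => ?_)
          rw [Finset.mul_sum]
          exact Finset.sum_congr rfl (fun R _ => histProb_snoc P s R)
      _ = 1 := by rw [hP1]; simpa using ih

lemma Ex_mono (hP0 : ∀ R, 0 ≤ P R) {k : ℕ} {F G : Hist n k → ℝ} (h : ∀ s, F s ≤ G s) :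
    Ex P k F ≤ Ex P k G :=
  Finset.sum_le_sum fun s _ => mul_le_mul_of_nonneg_left (h s) (histProb_nonneg P hP0 s)

lemma Ex_nonneg (hP0 : ∀ R, 0 ≤ P R) {k : ℕ} {F : Hist n k → ℝ} (h : ∀ s, 0 ≤ F s) :
    0 ≤ Ex P k F := by
  have := Ex_mono P hP0 (F := fun _ => 0) (G := F) h
  simpa [Ex] using this

lemma Ex_add {k : ℕ} (F G : Hist n k → ℝ) :
    Ex P k (fun s => F s + G s) = Ex P k F + Ex P k G := by
  rw [Ex, Ex, Ex, ← Finset.sum_add_distrib]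
  exact Finset.sum_congr rfl fun s _ => by ring

lemma Ex_sub {k : ℕ} (F G : Hist n k → ℝ) :
    Ex P k (fun s => F s - G s) = Ex P k F - Ex P k G := by
  rw [Ex, Ex, Ex, ← Finset.sum_sub_distrib]
  exact Finset.sum_congr rfl fun s _ => by ring

lemma Ex_const (hP1 : ∑ R : Finset (Fin n), P R = 1) {k : ℕ} (c : ℝ) :
    Ex P k (fun _ => c) = c := by
  rw [Ex, ← Finset.sum_mul, sum_histProb P hP1, one_mul]

lemma sample_split (hP1 : ∑ R : Finset (Fin n), P R = 1) (u w : Fin n → ℝ) :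
    ∑ R : Finset (Fin n), P R * (∑ i, if i ∈ R then u i else w i)
      = ∑ i, (probOf P i * u i + (1 - probOf P i) * w i) := by
  have h1 : ∀ R : Finset (Fin n), P R * (∑ i, if i ∈ R then u i else w i)
      = ∑ i, ((if i ∈ R then P R else 0) * u i + (if i ∈ R then 0 else P R) * w i) := by
    intro R
    rw [Finset.mul_sum]
    refine Finset.sum_congr rfl (fun i _ => ?_)
    split_ifs <;> ring
  rw [Finset.sum_congr rfl (fun R _ => h1 R), Finset.sum_comm]
  refine Finset.sum_congr rfl (fun i _ => ?_)
  rw [Finset.sum_add_distrib, ← Finset.sum_mul, ← Finset.sum_mul]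
  have h2 : ∑ R : Finset (Fin n), (if i ∈ R then 0 else P R) = 1 - probOf P i := by
    have : probOf P i + ∑ R : Finset (Fin n), (if i ∈ R then 0 else P R)
        = ∑ R : Finset (Fin n), P R := by
      rw [probOf, ← Finset.sum_add_distrib]
      exact Finset.sum_congr rfl (fun R _ => by split_ifs <;> ring)
    rw [hP1] at this; linarith
  rw [h2, probOf]

lemma probOf_le_one (hP0 : ∀ R, 0 ≤ P R) (hP1 : ∑ R : Finset (Fin n), P R = 1) (i : Fin n) :
    probOf P i ≤ 1 := by
  rw [probOf, ← hP1]
  exact Finset.sum_le_sum fun R _ => by split_ifs <;> simp [hP0 R]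

lemma Ex_congr {k : ℕ} {F G : Hist n k → ℝ} (h : ∀ s, F s = G s) : Ex P k F = Ex P k G :=
  Finset.sum_congr rfl fun s _ => by rw [h s]

lemma Ex_smul {k : ℕ} (c : ℝ) (F : Hist n k → ℝ) :
    Ex P k (fun s => c * F s) = c * Ex P k F := by
  rw [Ex, Ex, Finset.mul_sum]
  exact Finset.sum_congr rfl fun s _ => by ring

end Hists

set_option maxHeartbeats 2000000 in
/-- Theorem 1, almost sure convergence part.
For convex `g, f_i`, extrapolation `θ = 1`, i.i.d. proper samplings, and step size
operators `T, S` admitting ESO parameters `{v_i}` of `S^{1/2} A T^{1/2}` with `v_i < p_i`,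
the Bregman distance `D_h^q(w^{(k)}, w♯)` between the SPDHG iterates and any saddle point
`w♯` converges to zero almost surely. -/
theorem spdhg_bregman_converges_almost_surely {n : ℕ} (hn : 0 < n)
    (X : Type*) [NormedAddCommGroup X] [InnerProductSpace ℝ X] [CompleteSpace X]
    (Y : Fin n → Type*) [∀ i, NormedAddCommGroup (Y i)] [∀ i, InnerProductSpace ℝ (Y i)]
    [∀ i, CompleteSpace (Y i)]
    (A : ∀ i, X →L[ℝ] Y i) (g : X → ℝ) (fstar : ∀ i, Y i → ℝ)
    -- g and the f_i (hence the conjugates f_i*) are convex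
    (hg : ConvexOn ℝ Set.univ g) (hfstar : ∀ i, ConvexOn ℝ Set.univ (fstar i))
    -- step size operators: self-adjoint, positive definite, with square roots and inverses
    (T Tsqrt Tinv : X →L[ℝ] X) (S Ssqrt Sinv : ∀ i, Y i →L[ℝ] Y i)
    (hT : IsSelfAdjoint T) (hTpos : ∀ x : X, x ≠ 0 → 0 < ⟪T x, x⟫)
    (hTsqrt : IsSelfAdjoint Tsqrt) (hTsq : Tsqrt.comp Tsqrt = T)
    (hTinv : Tinv.comp T = ContinuousLinearMap.id ℝ X ∧
      T.comp Tinv = ContinuousLinearMap.id ℝ X)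
    (hS : ∀ i, IsSelfAdjoint (S i)) (hSpos : ∀ i, ∀ u : Y i, u ≠ 0 → 0 < ⟪S i u, u⟫)
    (hSsqrt : ∀ i, IsSelfAdjoint (Ssqrt i)) (hSsq : ∀ i, (Ssqrt i).comp (Ssqrt i) = S i)
    (hSinv : ∀ i, (Sinv i).comp (S i) = ContinuousLinearMap.id ℝ (Y i) ∧
      (S i).comp (Sinv i) = ContinuousLinearMap.id ℝ (Y i))
    -- the sampling distribution: proper
    (P : Finset (Fin n) → ℝ) (hP0 : ∀ R, 0 ≤ P R) (hP1 : ∑ R : Finset (Fin n), P R = 1)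
    (hp : ∀ i, 0 < probOf P i)
    -- ESO parameters of S^{1/2} A T^{1/2} with v_i < p_i
    (v : Fin n → ℝ)
    (hESO : ∀ z : ∀ i, Y i,
      ∑ R : Finset (Fin n), P R *
        ‖∑ i ∈ R, (ContinuousLinearMap.adjoint ((Ssqrt i).comp ((A i).comp Tsqrt))) (z i)‖ ^ 2
      ≤ ∑ i, probOf P i * v i * ‖z i‖ ^ 2)
    (hv : ∀ i, v i < probOf P i)
    -- a saddle point w♯ = (x♯, y♯): −A* y♯ ∈ ∂g(x♯), A_i x♯ ∈ ∂f_i*(y♯_i)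
    (xs : X) (ys : ∀ i, Y i)
    (hgs : ∀ u : X,
      g xs + ⟪-(∑ i, (ContinuousLinearMap.adjoint (A i)) (ys i)), u - xs⟫ ≤ g u)
    (hfs : ∀ i, ∀ u : Y i, fstar i (ys i) + ⟪A i xs, u - ys i⟫ ≤ fstar i u)
    -- the SPDHG iterates, as functions of the sampling history, with θ = 1
    (θ : ℝ) (hθ : θ = 1)
    (x : ∀ k, Hist n k → X) (y ybar : ∀ k, Hist n k → ∀ i, Y i)
    (hybar0 : ybar 0 = y 0)
    (hx : ∀ k (s : Hist n (k + 1)),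
      IsProx Tinv g
        (x k (histRes s) - T (∑ i, (ContinuousLinearMap.adjoint (A i)) (ybar k (histRes s) i)))
        (x (k + 1) s))
    (hy : ∀ k (s : Hist n (k + 1)) i,
      (i ∈ s (Fin.last k) →
        IsProx (Sinv i) (fstar i) (y k (histRes s) i + S i (A i (x (k + 1) s)))
          (y (k + 1) s i)) ∧
      (i ∉ s (Fin.last k) → y (k + 1) s i = y k (histRes s) i))
    (hybar : ∀ k (s : Hist n (k + 1)) i,
      ybar (k + 1) s i =
        y (k + 1) s i + (θ * (probOf P i)⁻¹) • (y (k + 1) s i - y k (histRes s) i))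
    -- the law of the infinite i.i.d. sequence of samplings
    [MeasurableSpace (Finset (Fin n))]
    (μ : Measure (ℕ → Finset (Fin n))) [IsProbabilityMeasure μ]
    (hμ : ∀ (K : ℕ) (s : Hist n K),
      (μ {ω : ℕ → Finset (Fin n) | ∀ j : Fin K, ω (j : ℕ) = s j}).toReal = histProb P s) :
    -- D_h^q(w^{(k)}, w♯) → 0 almost surely
    ∀ᵐ ω ∂μ, Filter.Tendsto
      (fun k =>
        (g (x k (fun j => ω (j : ℕ))) - g xs -
          ⟪-(∑ i, (ContinuousLinearMap.adjoint (A i)) (ys i)), x k (fun j => ω (j : ℕ)) - xs⟫) +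
        ∑ i, (fstar i (y k (fun j => ω (j : ℕ)) i) - fstar i (ys i) -
          ⟪A i xs, y k (fun j => ω (j : ℕ)) i - ys i⟫))
      Filter.atTop (nhds 0) := by
  classical
  haveI : Nonempty (Fin n) := ⟨⟨0, hn⟩⟩
  set qT : X → ℝ := fun u => ⟪Tinv u, u⟫ with hqT
  set qS : ∀ i, Y i → ℝ := fun i u => ⟪Sinv i u, u⟫ with hqS
  set Dxf : X → ℝ := fun u => g u - g xs -
      ⟪-(∑ i, (ContinuousLinearMap.adjoint (A i)) (ys i)), u - xs⟫ with hDxf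
  set Dyf : ∀ i, Y i → ℝ := fun i w => fstar i w - fstar i (ys i) - ⟪A i xs, w - ys i⟫ with hDyf
  set Sm : ∀ i, Y i →L[ℝ] Y i := fun i => (Ssqrt i).comp (Sinv i) with hSm
  set Cadj : ∀ i, Y i →L[ℝ] X :=
    fun i => ContinuousLinearMap.adjoint ((Ssqrt i).comp ((A i).comp Tsqrt)) with hCadj
  set DY : ∀ k, Hist n k → ∀ i, Y i :=
    fun k => match k with
      | 0 => fun _ _ => 0
      | (k+1) => fun s i => y (k+1) s i - y k (histRes s) i
    with hDY
  have hDY0 : ∀ (s : Hist n 0) (i : Fin n), DY 0 s i = 0 := fun s i => by rw [hDY]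
  have hDYS : ∀ k (s : Hist n (k+1)) i, DY (k+1) s i = y (k+1) s i - y k (histRes s) i :=
    fun k s i => by rw [hDY]
  set aF : ∀ k, Hist n k → ℝ := fun k s => (1/2) * qT (x k s - xs) with haF
  set bF : ∀ k, Hist n k → ℝ :=
    fun k s => ∑ i, (probOf P i)⁻¹ * ((1/2) * qS i (y k s i - ys i)) with hbF
  set dF : ∀ k, Hist n k → ℝ := fun k s => ∑ i, (probOf P i)⁻¹ * Dyf i (y k s i) with hdF
  set cF : ∀ k, Hist n k → ℝ :=
    fun k s => ∑ i, (probOf P i)⁻¹ * ⟪A i (x k s - xs), DY k s i⟫ with hcF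
  set eF : ∀ k, Hist n k → ℝ :=
    fun k s => ∑ i, (probOf P i)⁻¹ * ((1/2) * qS i (DY k s i)) with heF
  set mF : ∀ k, Hist n k → ℝ :=
    fun k s => (1/2) * ‖∑ i, Cadj i ((probOf P i)⁻¹ • Sm i (DY k s i))‖^2 with hmF
  set γ : ℝ := max (Finset.univ.sup' Finset.univ_nonempty (fun i => v i / probOf P i)) 0 with hγ
  have hpne : ∀ i, probOf P i ≠ 0 := fun i => ne_of_gt (hp i)
  have hγ0 : (0:ℝ) ≤ γ := le_max_right _ _
  have hγ1 : γ < 1 := by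
    rw [hγ]
    refine max_lt ?_ one_pos
    rw [Finset.sup'_lt_iff]
    intro i _
    exact (div_lt_one (hp i)).mpr (hv i)
  have hγi : ∀ i, v i / probOf P i ≤ γ := fun i =>
    le_trans (Finset.le_sup' (fun i => v i / probOf P i) (Finset.mem_univ i)) (le_max_left _ _)
  have hTid1 : ∀ u : X, Tinv (T u) = u := fun u => by
    have := ContinuousLinearMap.ext_iff.mp hTinv.1 u
    simpa using this
  have hTid2 : ∀ u : X, T (Tinv u) = u := fun u => by
    have := ContinuousLinearMap.ext_iff.mp hTinv.2 u
    simpa using this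
  have hSid1 : ∀ i (u : Y i), Sinv i (S i u) = u := fun i u => by
    have := ContinuousLinearMap.ext_iff.mp (hSinv i).1 u
    simpa using this
  have hSid2 : ∀ i (u : Y i), S i (Sinv i u) = u := fun i u => by
    have := ContinuousLinearMap.ext_iff.mp (hSinv i).2 u
    simpa using this
  have hTinvSA : IsSelfAdjoint Tinv := by
    rw [ContinuousLinearMap.isSelfAdjoint_iff']
    refine ((ContinuousLinearMap.eq_adjoint_iff Tinv Tinv).mpr ?_).symm
    intro u w
    calc ⟪Tinv u, w⟫ = ⟪Tinv u, T (Tinv w)⟫ := by rw [hTid2]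
      _ = ⟪T (Tinv w), Tinv u⟫ := real_inner_comm _ _
      _ = ⟪T (Tinv u), Tinv w⟫ := sa_inner_comm T hT _ _
      _ = ⟪u, Tinv w⟫ := by rw [hTid2]
  have hSinvSA : ∀ i, IsSelfAdjoint (Sinv i) := fun i => by
    rw [ContinuousLinearMap.isSelfAdjoint_iff']
    refine ((ContinuousLinearMap.eq_adjoint_iff (Sinv i) (Sinv i)).mpr ?_).symm
    intro u w
    calc ⟪Sinv i u, w⟫ = ⟪Sinv i u, S i (Sinv i w)⟫ := by rw [hSid2]
      _ = ⟪S i (Sinv i w), Sinv i u⟫ := real_inner_comm _ _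
      _ = ⟪S i (Sinv i u), Sinv i w⟫ := sa_inner_comm (S i) (hS i) _ _
      _ = ⟪u, Sinv i w⟫ := by rw [hSid2]
  have hqTflip : ∀ u w : X, qT (u - w) = qT (w - u) := fun u w => by
    rw [hqT]
    show ⟪Tinv (u - w), u - w⟫ = ⟪Tinv (w - u), w - u⟫
    rw [show u - w = -(w - u) by abel, map_neg, inner_neg_neg]
  have hqSflip : ∀ i (u w : Y i), qS i (u - w) = qS i (w - u) := fun i u w => by
    rw [hqS]
    show ⟪Sinv i (u - w), u - w⟫ = ⟪Sinv i (w - u), w - u⟫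
    rw [show u - w = -(w - u) by abel, map_neg, inner_neg_neg]
  have hqTpos : ∀ u : X, u ≠ 0 → 0 < ⟪Tinv u, u⟫ := by
    intro u hu
    have hw : Tinv u ≠ 0 := fun h0 => hu (by rw [← hTid2 u, h0, map_zero])
    have h1 := hTpos (Tinv u) hw
    calc (0:ℝ) < ⟪T (Tinv u), Tinv u⟫ := h1
      _ = ⟪Tinv u, T (Tinv u)⟫ := real_inner_comm _ _
      _ = ⟪Tinv u, u⟫ := by rw [hTid2]
  have hqT0 : ∀ u : X, 0 ≤ qT u := by
    intro u
    rcases eq_or_ne u 0 with h | h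
    · rw [hqT]; show (0:ℝ) ≤ ⟪Tinv u, u⟫; rw [h]; simp
    · rw [hqT]; exact le_of_lt (hqTpos u h)
  have hqSpos : ∀ i (u : Y i), u ≠ 0 → 0 < ⟪Sinv i u, u⟫ := by
    intro i u hu
    have hw : Sinv i u ≠ 0 := fun h0 => hu (by rw [← hSid2 i u, h0, map_zero])
    have h1 := hSpos i (Sinv i u) hw
    calc (0:ℝ) < ⟪S i (Sinv i u), Sinv i u⟫ := h1
      _ = ⟪Sinv i u, S i (Sinv i u)⟫ := real_inner_comm _ _
      _ = ⟪Sinv i u, u⟫ := by rw [hSid2]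
  have hqS0 : ∀ i (u : Y i), 0 ≤ qS i u := by
    intro i u
    rcases eq_or_ne u 0 with h | h
    · rw [hqS]; show (0:ℝ) ≤ ⟪Sinv i u, u⟫; rw [h]; simp
    · rw [hqS]; exact le_of_lt (hqSpos i u h)
  have hqSz : ∀ i, qS i 0 = 0 := fun i => by rw [hqS]; show (⟪Sinv i 0, 0⟫:ℝ) = 0; simp
  have hDxf0 : ∀ u : X, 0 ≤ Dxf u := fun u => by
    have := hgs u
    rw [hDxf]
    show (0:ℝ) ≤ g u - g xs - ⟪-(∑ i, (ContinuousLinearMap.adjoint (A i)) (ys i)), u - xs⟫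
    linarith
  have hDyf0 : ∀ i (w : Y i), 0 ≤ Dyf i w := fun i w => by
    have := hfs i w
    rw [hDyf]
    show (0:ℝ) ≤ fstar i w - fstar i (ys i) - ⟪A i xs, w - ys i⟫
    linarith
  have hDxId : ∀ u : X, Dxf u = g u - g xs + ∑ i, ⟪A i (u - xs), ys i⟫ := by
    intro u
    rw [hDxf]
    show g u - g xs - ⟪-(∑ i, (ContinuousLinearMap.adjoint (A i)) (ys i)), u - xs⟫
      = g u - g xs + ∑ i, ⟪A i (u - xs), ys i⟫
    rw [inner_neg_left, sum_inner]
    have h1 : ∑ i, ⟪(ContinuousLinearMap.adjoint (A i)) (ys i), u - xs⟫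
        = ∑ i, ⟪A i (u - xs), ys i⟫ :=
      Finset.sum_congr rfl fun i _ => by
        rw [ContinuousLinearMap.adjoint_inner_left]
        exact (real_inner_comm _ _).symm
    rw [h1]; ring
  have hXdep : ∀ k (s t : Hist n (k+1)), histRes s = histRes t → x (k+1) s = x (k+1) t :=
    by
    intro k s t h
    refine isProx_unique hTinvSA hqTpos hg (hx k s) ?_
    have h2 := hx k t
    rwa [← h] at h2
  have hYdep : ∀ k (s t : Hist n (k+1)) i, histRes s = histRes t →
      i ∈ s (Fin.last k) → i ∈ t (Fin.last k) → y (k+1) s i = y (k+1) t i := by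
    intro k s t i hres hs ht
    have h1 := (hy k s i).1 hs
    have h2 := (hy k t i).1 ht
    rw [← hres, hXdep k t s hres.symm] at h2
    exact isProx_unique (hSinvSA i) (hqSpos i) (hfstar i) h1 h2
  have hybarEq : ∀ k (s : Hist n k) i, ybar k s i = y k s i + (probOf P i)⁻¹ • DY k s i :=
    by
    intro k
    match k with
    | 0 =>
      intro s i
      rw [hybar0, hDY0 s i, smul_zero, add_zero]
    | (k+1) =>
      intro s i
      rw [hybar k s i, hθ, one_mul, hDYS]
  have hSmq : ∀ i (w : Y i), ‖Sm i w‖^2 = qS i w := by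
    intro i w
    rw [hSm, hqS]
    show ‖Ssqrt i (Sinv i w)‖^2 = ⟪Sinv i w, w⟫
    rw [← real_inner_self_eq_norm_sq]
    have hsq : ∀ u : Y i, Ssqrt i (Ssqrt i u) = S i u := fun u => by
      rw [← hSsq i]; rfl
    calc ⟪Ssqrt i (Sinv i w), Ssqrt i (Sinv i w)⟫
        = ⟪Ssqrt i (Ssqrt i (Sinv i w)), Sinv i w⟫ := sa_inner_comm (Ssqrt i) (hSsqrt i) _ _
      _ = ⟪S i (Sinv i w), Sinv i w⟫ := by rw [hsq]
      _ = ⟪w, Sinv i w⟫ := by rw [hSid2]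
      _ = ⟪Sinv i w, w⟫ := real_inner_comm _ _
  have hL7 : ∀ (u : X) (w : ∀ i, Y i),
      ∑ i, (probOf P i)⁻¹ * ⟪A i u, w i⟫
        ≤ (1/2) * qT u + (1/2) * ‖∑ i, Cadj i ((probOf P i)⁻¹ • Sm i (w i))‖^2 := by
    intro u w
    have hTsq' : ∀ u : X, Tsqrt (Tsqrt u) = T u := fun u => by rw [← hTsq]; rfl
    have hSsq' : ∀ i (u : Y i), Ssqrt i (Ssqrt i u) = S i u := fun i u => by
      rw [← hSsq i]; rfl
    have eT : ContinuousLinearMap.adjoint Tsqrt = Tsqrt :=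
      ContinuousLinearMap.isSelfAdjoint_iff'.mp hTsqrt
    have eS : ∀ i, ContinuousLinearMap.adjoint (Ssqrt i) = Ssqrt i :=
      fun i => ContinuousLinearMap.isSelfAdjoint_iff'.mp (hSsqrt i)
    have hCz : ∀ i, Cadj i ((probOf P i)⁻¹ • Sm i (w i))
        = (probOf P i)⁻¹ • Tsqrt ((ContinuousLinearMap.adjoint (A i)) (w i)) := by
      intro i
      rw [hCadj, hSm]
      show (ContinuousLinearMap.adjoint ((Ssqrt i).comp ((A i).comp Tsqrt)))
        ((probOf P i)⁻¹ • ((Ssqrt i).comp (Sinv i)) (w i)) = _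
      rw [ContinuousLinearMap.adjoint_comp, ContinuousLinearMap.adjoint_comp, eT, eS]
      simp only [ContinuousLinearMap.comp_apply, ContinuousLinearMap.map_smul]
      rw [hSsq', hSid2]
    have hsum : ∑ i, Cadj i ((probOf P i)⁻¹ • Sm i (w i))
        = Tsqrt (∑ i, (probOf P i)⁻¹ • (ContinuousLinearMap.adjoint (A i)) (w i)) := by
      rw [map_sum]
      exact Finset.sum_congr rfl fun i _ => by
        rw [hCz i, ContinuousLinearMap.map_smul]
    set W : X := ∑ i, (probOf P i)⁻¹ • (ContinuousLinearMap.adjoint (A i)) (w i) with hW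
    have hLHS : ∑ i, (probOf P i)⁻¹ * ⟪A i u, w i⟫ = ⟪u, W⟫ := by
      rw [hW, inner_sum]
      exact Finset.sum_congr rfl fun i _ => by
        rw [real_inner_smul_right, ContinuousLinearMap.adjoint_inner_right]
    set uh : X := Tsqrt (Tinv u) with huh
    have huhT : Tsqrt uh = u := by rw [huh, hTsq', hTid2]
    have h1 : ⟪u, W⟫ = ⟪uh, Tsqrt W⟫ := by
      conv_lhs => rw [← huhT]
      rw [sa_inner_comm Tsqrt hTsqrt uh W]
      exact real_inner_comm _ _
    have h2 : ⟪uh, Tsqrt W⟫ ≤ (1/2) * ‖uh‖^2 + (1/2) * ‖Tsqrt W‖^2 := by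
      have h3 := real_inner_le_norm uh (Tsqrt W)
      nlinarith [sq_nonneg (‖uh‖ - ‖Tsqrt W‖)]
    have h4 : ‖uh‖^2 = qT u := by
      rw [← real_inner_self_eq_norm_sq, huh,
        sa_inner_comm Tsqrt hTsqrt (Tinv u) (Tsqrt (Tinv u)), hTsq', hTid2, hqT]
      exact real_inner_comm _ _
    calc ∑ i, (probOf P i)⁻¹ * ⟪A i u, w i⟫ = ⟪uh, Tsqrt W⟫ := by rw [hLHS, h1]
      _ ≤ (1/2) * ‖uh‖^2 + (1/2) * ‖Tsqrt W‖^2 := h2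
      _ = (1/2) * qT u + (1/2) * ‖∑ i, Cadj i ((probOf P i)⁻¹ • Sm i (w i))‖^2 := by
          rw [h4, hsum]
  have hCa : ∀ k (s : Hist n k), cF k s ≤ aF k s + mF k s := by
    intro k s
    have h := hL7 (x k s - xs) (DY k s)
    simp only [haF, hcF, hmF]
    exact h
  have KEY : ∀ (k : ℕ) (s : Hist n k),
      (∑ R, P R * Dxf (x (k+1) (Fin.snoc s R)))
      + (∑ i, Dyf i (y k s i))
      + ((∑ R, P R * aF (k+1) (Fin.snoc s R)) + (∑ R, P R * bF (k+1) (Fin.snoc s R))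
         + (∑ R, P R * dF (k+1) (Fin.snoc s R)) - (∑ R, P R * cF (k+1) (Fin.snoc s R))
         + (∑ R, P R * eF (k+1) (Fin.snoc s R)))
      ≤ aF k s + bF k s + dF k s - cF k s + mF k s := by
    intro k s
    obtain ⟨Xp, hXp⟩ : ∃ Xp, x (k+1) (Fin.snoc s Finset.univ) = Xp := ⟨_, rfl⟩
    obtain ⟨yh, hyhE⟩ : ∃ yh : ∀ i, Y i, ∀ i, y (k+1) (Fin.snoc s Finset.univ) i = yh i :=
      ⟨_, fun _ => rfl⟩
    have hpc : ∀ (i : Fin n) (c : ℝ), probOf P i * ((probOf P i)⁻¹ * c) = c := fun i c => by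
      rw [← mul_assoc, mul_inv_cancel₀ (hpne i), one_mul]
    have hqTraw : ∀ a : X, ⟪Tinv a, a⟫ = qT a := fun a => by rw [hqT]
    have hqSraw : ∀ i (a : Y i), ⟪Sinv i a, a⟫ = qS i a := fun i a => by rw [hqS]
    have hqTfl : ∀ a b : X, ⟪Tinv (a - b), a - b⟫ = qT (b - a) := fun a b => by
      rw [hqTraw, hqTflip]
    have hqSfl : ∀ i (a b : Y i), ⟪Sinv i (a - b), a - b⟫ = qS i (b - a) := fun i a b => by
      rw [hqSraw, hqSflip]
    have hXeq : ∀ R : Finset (Fin n), x (k+1) (Fin.snoc s R) = Xp := fun R => by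
      rw [← hXp]
      exact hXdep k _ _ (by rw [histRes_snoc, histRes_snoc])
    have hyin : ∀ (R : Finset (Fin n)) i, i ∈ R → y (k+1) (Fin.snoc s R) i = yh i := by
      intro R i hi
      rw [← hyhE i]
      refine hYdep k _ _ i (by rw [histRes_snoc, histRes_snoc]) ?_ ?_
      · rw [Fin.snoc_last]; exact hi
      · rw [Fin.snoc_last]; exact Finset.mem_univ i
    have hyout : ∀ (R : Finset (Fin n)) i, i ∉ R → y (k+1) (Fin.snoc s R) i = y k s i := by
      intro R i hi
      have h := (hy k (Fin.snoc s R) i).2 (by rw [Fin.snoc_last]; exact hi)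
      rwa [histRes_snoc] at h
    have hDYsnoc : ∀ (R : Finset (Fin n)) i,
        DY (k+1) (Fin.snoc s R) i = if i ∈ R then yh i - y k s i else 0 := by
      intro R i
      rw [hDYS, histRes_snoc]
      by_cases hi : i ∈ R
      · rw [if_pos hi, hyin R i hi]
      · rw [if_neg hi, hyout R i hi, sub_self]
    -- the x-update inequality
    have hproxX := isProx_strong hTinvSA hg (hx k (Fin.snoc s Finset.univ)) xs
    rw [histRes_snoc, hXp] at hproxX
    set V : X := ∑ i, (ContinuousLinearMap.adjoint (A i)) (ybar k s i) with hV
    have hexpX : ∀ w : X, ⟪Tinv (w - (x k s - T V)), w - (x k s - T V)⟫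
        = qT (w - x k s) + 2*⟪w - x k s, V⟫ + ⟪Tinv (T V), T V⟫ := by
      intro w
      have h1 : w - (x k s - T V) = (w - x k s) + T V := by abel
      rw [h1, sa_expand1 Tinv hTinvSA (w - x k s) (T V)]
      have h2 : ⟪Tinv (w - x k s), T V⟫ = ⟪w - x k s, V⟫ := by
        rw [sa_inner_comm Tinv hTinvSA (w - x k s) (T V), hTid1]
        exact real_inner_comm _ _
      rw [h2, hqTraw]
    rw [hexpX Xp, hexpX xs, hqTfl xs Xp] at hproxX
    -- hproxX : g Xp + ½(qT (Xp - xk) + 2⟪Xp-xk,V⟫ + C) + ½ qT (Xp - xs)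
    --          ≤ g xs + ½(qT (xs - xk) + 2⟪xs-xk,V⟫ + C)
    have hVdiff : (⟪Xp - x k s, V⟫:ℝ) - ⟪xs - x k s, V⟫ = ⟪Xp - xs, V⟫ := by
      rw [← inner_sub_left]
      congr 1
      abel
    have hVsum : (⟪Xp - xs, V⟫:ℝ) = ∑ i, ⟪A i (Xp - xs), ybar k s i⟫ := by
      rw [hV, inner_sum]
      exact Finset.sum_congr rfl fun i _ => ContinuousLinearMap.adjoint_inner_right _ _ _
    have hybarSum : ∑ i, ⟪A i (Xp - xs), ybar k s i⟫
        = (∑ i, ⟪A i (Xp - xs), y k s i - ys i⟫) + (∑ i, ⟪A i (Xp - xs), ys i⟫)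
          + (cF k s + ∑ i, (probOf P i)⁻¹ * ⟪A i (Xp - x k s), DY k s i⟫) := by
      have h1 : ∀ i, (⟪A i (Xp - xs), ybar k s i⟫:ℝ)
          = ⟪A i (Xp - xs), y k s i - ys i⟫ + ⟪A i (Xp - xs), ys i⟫
            + ((probOf P i)⁻¹ * ⟪A i (x k s - xs), DY k s i⟫
               + (probOf P i)⁻¹ * ⟪A i (Xp - x k s), DY k s i⟫) := by
        intro i
        rw [hybarEq k s i, inner_add_right, real_inner_smul_right]
        have h2 : (⟪A i (Xp - xs), y k s i⟫:ℝ)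
            = ⟪A i (Xp - xs), y k s i - ys i⟫ + ⟪A i (Xp - xs), ys i⟫ := by
          rw [← inner_add_right]
          congr 1
          abel
        have h3 : (⟪A i (Xp - xs), DY k s i⟫:ℝ)
            = ⟪A i (x k s - xs), DY k s i⟫ + ⟪A i (Xp - x k s), DY k s i⟫ := by
          rw [← inner_add_left, ← map_add]
          congr 2
          abel
        rw [h2, h3]
        ring
      rw [Finset.sum_congr rfl fun i _ => h1 i]
      rw [Finset.sum_add_distrib, Finset.sum_add_distrib, Finset.sum_add_distrib]
    have hDxXp : Dxf Xp = g Xp - g xs + ∑ i, ⟪A i (Xp - xs), ys i⟫ := hDxId Xp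
    have hI : Dxf Xp + (∑ i, ⟪A i (Xp - xs), y k s i - ys i⟫) + cF k s
        + (∑ i, (probOf P i)⁻¹ * ⟪A i (Xp - x k s), DY k s i⟫)
        ≤ aF k s - (1/2) * qT (Xp - xs) - (1/2) * qT (Xp - x k s) := by
      simp only [haF]
      have hflip : qT (x k s - xs) = qT (xs - x k s) := hqTflip _ _
      have e1 : Dxf Xp + (∑ i, ⟪A i (Xp - xs), y k s i - ys i⟫) + cF k s
          + (∑ i, (probOf P i)⁻¹ * ⟪A i (Xp - x k s), DY k s i⟫)
          = g Xp - g xs + ⟪Xp - xs, V⟫ := by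
        rw [hDxXp, hVsum, hybarSum]
        ring
      rw [e1, hflip]
      linarith [hproxX, hVdiff]
    -- the cross-term bound
    have hcross : -((1/2) * qT (Xp - x k s) + mF k s)
        ≤ ∑ i, (probOf P i)⁻¹ * ⟪A i (Xp - x k s), DY k s i⟫ := by
      have h := hL7 (x k s - Xp) (DY k s)
      have h2 : ∑ i, (probOf P i)⁻¹ * ⟪A i (x k s - Xp), DY k s i⟫
          = -∑ i, (probOf P i)⁻¹ * ⟪A i (Xp - x k s), DY k s i⟫ := by
        rw [← Finset.sum_neg_distrib]
        refine Finset.sum_congr rfl fun i _ => ?_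
        rw [show x k s - Xp = -(Xp - x k s) by abel, map_neg, inner_neg_left]
        ring
      rw [h2] at h
      have h3 : qT (x k s - Xp) = qT (Xp - x k s) := hqTflip _ _
      simp only [hmF]
      rw [h3] at h
      linarith
    -- the y-update inequalities
    have hproxY : ∀ i, Dyf i (yh i) - ⟪A i (Xp - xs), yh i - ys i⟫
        ≤ (1/2) * qS i (y k s i - ys i) - (1/2) * qS i (yh i - ys i)
          - (1/2) * qS i (yh i - y k s i) := by
      intro i
      have hp0 := (hy k (Fin.snoc s Finset.univ) i).1
        (by rw [Fin.snoc_last]; exact Finset.mem_univ i)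
      rw [histRes_snoc, hXp, hyhE i] at hp0
      have h := isProx_strong (hSinvSA i) (hfstar i) hp0 (ys i)
      have hexpY : ∀ w : Y i,
          ⟪Sinv i (w - (y k s i + S i (A i Xp))), w - (y k s i + S i (A i Xp))⟫
          = qS i (w - y k s i) - 2*⟪w - y k s i, A i Xp⟫
            + ⟪Sinv i (S i (A i Xp)), S i (A i Xp)⟫ := by
        intro w
        have h1 : w - (y k s i + S i (A i Xp)) = (w - y k s i) + (-(S i (A i Xp))) := by abel
        rw [h1, sa_expand1 (Sinv i) (hSinvSA i) _ _]
        have h2 : ⟪Sinv i (w - y k s i), -(S i (A i Xp))⟫ = -⟪w - y k s i, A i Xp⟫ := by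
          rw [inner_neg_right, sa_inner_comm (Sinv i) (hSinvSA i) (w - y k s i) (S i (A i Xp)),
            hSid1]
          rw [real_inner_comm]
        rw [h2, map_neg, inner_neg_neg, hqSraw]
        ring
      rw [hexpY (yh i), hexpY (ys i), hqSfl i (ys i) (yh i)] at h
      have h3 : (⟪yh i - y k s i, A i Xp⟫:ℝ) - ⟪ys i - y k s i, A i Xp⟫
          = ⟪yh i - ys i, A i Xp⟫ := by
        rw [← inner_sub_left]
        congr 1
        abel
      have h4 : (⟪A i (Xp - xs), yh i - ys i⟫:ℝ)
          = ⟪yh i - ys i, A i Xp⟫ - ⟪A i xs, yh i - ys i⟫ := by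
        rw [map_sub, inner_sub_left]
        congr 1
        exact real_inner_comm _ _
      have h5 : Dyf i (yh i) = fstar i (yh i) - fstar i (ys i) - ⟪A i xs, yh i - ys i⟫ := by
        rw [hDyf]
      have h6 : qS i (ys i - y k s i) = qS i (y k s i - ys i) := hqSflip i _ _
      rw [h6] at h
      linarith
    have hIIsum : (∑ i, Dyf i (yh i)) - (∑ i, ⟪A i (Xp - xs), yh i - ys i⟫)
        ≤ ((∑ i, (1/2) * qS i (y k s i - ys i)) - (∑ i, (1/2) * qS i (yh i - ys i)))
          - (∑ i, (1/2) * qS i (yh i - y k s i)) := by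
      have h := Finset.sum_le_sum (fun i (_ : i ∈ Finset.univ) => hproxY i)
      rw [← Finset.sum_sub_distrib, ← Finset.sum_sub_distrib, ← Finset.sum_sub_distrib]
      exact h
    -- conditional expectation computations
    have hEY : ∀ (F : ∀ i, Y i → ℝ), ∑ R, P R * (∑ i, F i (y (k+1) (Fin.snoc s R) i))
        = ∑ i, (probOf P i * F i (yh i) + (1 - probOf P i) * F i (y k s i)) := by
      intro F
      have h1 : ∀ R : Finset (Fin n), ∑ i, F i (y (k+1) (Fin.snoc s R) i)
          = ∑ i, (if i ∈ R then F i (yh i) else F i (y k s i)) := fun R =>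
        Finset.sum_congr rfl fun i _ => by
          by_cases hi : i ∈ R
          · rw [if_pos hi, hyin R i hi]
          · rw [if_neg hi, hyout R i hi]
      rw [Finset.sum_congr rfl fun R _ => congrArg (P R * ·) (h1 R), sample_split P hP1]
    have hEDY : ∀ (F : ∀ i, Y i → ℝ), ∑ R, P R * (∑ i, F i (DY (k+1) (Fin.snoc s R) i))
        = ∑ i, (probOf P i * F i (yh i - y k s i) + (1 - probOf P i) * F i 0) := by
      intro F
      have h1 : ∀ R : Finset (Fin n), ∑ i, F i (DY (k+1) (Fin.snoc s R) i)
          = ∑ i, (if i ∈ R then F i (yh i - y k s i) else F i 0) := fun R =>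
        Finset.sum_congr rfl fun i _ => by
          rw [hDYsnoc R i]
          by_cases hi : i ∈ R
          · rw [if_pos hi, if_pos hi]
          · rw [if_neg hi, if_neg hi]
      rw [Finset.sum_congr rfl fun R _ => congrArg (P R * ·) (h1 R), sample_split P hP1]
    have hEDx : ∑ R, P R * Dxf (x (k+1) (Fin.snoc s R)) = Dxf Xp := by
      rw [Finset.sum_congr rfl fun R _ => congrArg (P R * Dxf ·) (hXeq R), ← Finset.sum_mul,
        hP1, one_mul]
    have hEa : ∑ R, P R * aF (k+1) (Fin.snoc s R) = (1/2) * qT (Xp - xs) := by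
      have h1 : ∀ R : Finset (Fin n), aF (k+1) (Fin.snoc s R) = (1/2) * qT (Xp - xs) :=
        fun R => by simp only [haF]; rw [hXeq R]
      rw [Finset.sum_congr rfl fun R _ => congrArg (P R * ·) (h1 R), ← Finset.sum_mul,
        hP1, one_mul]
    have hEb : ∑ R, P R * bF (k+1) (Fin.snoc s R)
        = bF k s + (∑ i, (1/2) * qS i (yh i - ys i)) - (∑ i, (1/2) * qS i (y k s i - ys i)) := by
      have h0 := hEY (fun i w => (probOf P i)⁻¹ * ((1/2) * qS i (w - ys i)))
      have h1 : ∀ R : Finset (Fin n), bF (k+1) (Fin.snoc s R)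
          = ∑ i, (fun i w => (probOf P i)⁻¹ * ((1/2) * qS i (w - ys i))) i
              (y (k+1) (Fin.snoc s R) i) := fun R => by simp only [hbF]
      rw [Finset.sum_congr rfl fun R _ => congrArg (P R * ·) (h1 R), h0]
      simp only [hbF]
      rw [← Finset.sum_add_distrib, ← Finset.sum_sub_distrib]
      refine Finset.sum_congr rfl fun i _ => ?_
      rw [hpc i, sub_mul, one_mul, hpc i]
      ring
    have hEd : ∑ R, P R * dF (k+1) (Fin.snoc s R)
        = dF k s + (∑ i, Dyf i (yh i)) - (∑ i, Dyf i (y k s i)) := by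
      have h0 := hEY (fun i w => (probOf P i)⁻¹ * Dyf i w)
      have h1 : ∀ R : Finset (Fin n), dF (k+1) (Fin.snoc s R)
          = ∑ i, (fun i w => (probOf P i)⁻¹ * Dyf i w) i (y (k+1) (Fin.snoc s R) i) :=
        fun R => by simp only [hdF]
      rw [Finset.sum_congr rfl fun R _ => congrArg (P R * ·) (h1 R), h0]
      simp only [hdF]
      rw [← Finset.sum_add_distrib, ← Finset.sum_sub_distrib]
      refine Finset.sum_congr rfl fun i _ => ?_
      rw [hpc i, sub_mul, one_mul, hpc i]
      ring
    have hEc : ∑ R, P R * cF (k+1) (Fin.snoc s R)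
        = (∑ i, ⟪A i (Xp - xs), yh i - ys i⟫) - (∑ i, ⟪A i (Xp - xs), y k s i - ys i⟫) := by
      have h0 := hEDY (fun i w => (probOf P i)⁻¹ * ⟪A i (Xp - xs), w⟫)
      have h1 : ∀ R : Finset (Fin n), cF (k+1) (Fin.snoc s R)
          = ∑ i, (fun i w => (probOf P i)⁻¹ * ⟪A i (Xp - xs), w⟫) i
              (DY (k+1) (Fin.snoc s R) i) := by
        intro R
        simp only [hcF]
        exact Finset.sum_congr rfl fun i _ => by rw [hXeq R]
      rw [Finset.sum_congr rfl fun R _ => congrArg (P R * ·) (h1 R), h0]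
      rw [← Finset.sum_sub_distrib]
      refine Finset.sum_congr rfl fun i _ => ?_
      rw [hpc i]
      have h2 : (⟪A i (Xp - xs), yh i - y k s i⟫:ℝ)
          = ⟪A i (Xp - xs), yh i - ys i⟫ - ⟪A i (Xp - xs), y k s i - ys i⟫ := by
        rw [← inner_sub_right]
        congr 1
        abel
      rw [h2]
      simp
    have hEe : ∑ R, P R * eF (k+1) (Fin.snoc s R)
        = ∑ i, (1/2) * qS i (yh i - y k s i) := by
      have h0 := hEDY (fun i w => (probOf P i)⁻¹ * ((1/2) * qS i w))
      have h1 : ∀ R : Finset (Fin n), eF (k+1) (Fin.snoc s R)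
          = ∑ i, (fun i w => (probOf P i)⁻¹ * ((1/2) * qS i w)) i
              (DY (k+1) (Fin.snoc s R) i) := fun R => by simp only [heF]
      rw [Finset.sum_congr rfl fun R _ => congrArg (P R * ·) (h1 R), h0]
      refine Finset.sum_congr rfl fun i _ => ?_
      rw [hpc i, hqSz i]
      ring
    rw [hEDx, hEa, hEb, hEd, hEc, hEe]
    linarith [hI, hcross, hIIsum]
  have hM : ∀ k, Ex P k (mF k) ≤ γ * Ex P k (eF k) := by
    intro k
    match k with
    | 0 =>
      have hm0 : ∀ s : Hist n 0, mF 0 s = 0 := by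
        intro s
        rw [hmF]
        have : ∀ i : Fin n, Cadj i ((probOf P i)⁻¹ • Sm i (DY 0 s i)) = 0 := fun i => by
          rw [hDY0 s i]; simp
        simp [this]
      have he0 : ∀ s : Hist n 0, eF 0 s = 0 := by
        intro s
        rw [heF]
        refine Finset.sum_eq_zero fun i _ => ?_
        rw [hDY0 s i, hqSz i]; ring
      rw [Ex_congr P hm0, Ex_congr P he0]
      simp [Ex]
    | (k+1) =>
      rw [Ex_step P (mF (k+1)), Ex_step P (eF (k+1)), ← Ex_smul P γ]
      refine Ex_mono P hP0 fun s => ?_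
      -- the common "full update" vector
      set yh : ∀ i, Y i := fun i => y (k+1) (Fin.snoc s Finset.univ) i with hyh
      have hyin : ∀ (R : Finset (Fin n)) i, i ∈ R → y (k+1) (Fin.snoc s R) i = yh i := by
        intro R i hi
        rw [hyh]
        refine hYdep k _ _ i (by rw [histRes_snoc, histRes_snoc]) ?_ ?_
        · rw [Fin.snoc_last]; exact hi
        · rw [Fin.snoc_last]; exact Finset.mem_univ i
      have hyout : ∀ (R : Finset (Fin n)) i, i ∉ R → y (k+1) (Fin.snoc s R) i = y k s i := by
        intro R i hi
        have h := (hy k (Fin.snoc s R) i).2 (by rw [Fin.snoc_last]; exact hi)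
        rwa [histRes_snoc] at h
      have hDYsnoc : ∀ (R : Finset (Fin n)) i,
          DY (k+1) (Fin.snoc s R) i = if i ∈ R then yh i - y k s i else 0 := by
        intro R i
        rw [hDYS, histRes_snoc]
        by_cases hi : i ∈ R
        · rw [if_pos hi, hyin R i hi]
        · rw [if_neg hi, hyout R i hi, sub_self]
      set z : ∀ i, Y i := fun i => (probOf P i)⁻¹ • Sm i (yh i - y k s i) with hz
      have hmEq : ∀ R : Finset (Fin n),
          mF (k+1) (Fin.snoc s R) = (1/2) * ‖∑ i ∈ R, Cadj i (z i)‖^2 := by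
        intro R
        simp only [hmF]
        have hss : ∑ i, Cadj i ((probOf P i)⁻¹ • Sm i (DY (k+1) (Fin.snoc s R) i))
            = ∑ i ∈ R, Cadj i (z i) := by
          have h1 : ∑ i ∈ R, Cadj i ((probOf P i)⁻¹ • Sm i (DY (k+1) (Fin.snoc s R) i))
              = ∑ i, Cadj i ((probOf P i)⁻¹ • Sm i (DY (k+1) (Fin.snoc s R) i)) :=
            Finset.sum_subset (Finset.subset_univ R) (fun i _ hi => by
              rw [hDYsnoc R i, if_neg hi]; simp)
          rw [← h1]
          exact Finset.sum_congr rfl fun i hi => by rw [hDYsnoc R i, if_pos hi, hz]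
        rw [hss]
      have heEq : ∑ R, P R * eF (k+1) (Fin.snoc s R)
          = ∑ i, (1/2) * qS i (yh i - y k s i) := by
        have h1 : ∀ R : Finset (Fin n), eF (k+1) (Fin.snoc s R)
            = ∑ i, (if i ∈ R then (probOf P i)⁻¹ * ((1/2) * qS i (yh i - y k s i)) else 0) := by
          intro R
          simp only [heF]
          refine Finset.sum_congr rfl fun i _ => ?_
          rw [hDYsnoc R i]
          by_cases hi : i ∈ R
          · rw [if_pos hi, if_pos hi]
          · rw [if_neg hi, if_neg hi, hqSz i]; ring
        rw [Finset.sum_congr rfl fun R _ => congrArg (P R * ·) (h1 R)]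
        have h2 := sample_split P hP1
          (fun i => (probOf P i)⁻¹ * ((1/2) * qS i (yh i - y k s i))) (fun _ => 0)
        simp only [mul_zero, add_zero] at h2
        rw [h2]
        exact Finset.sum_congr rfl fun i _ => by
          rw [← mul_assoc, mul_inv_cancel₀ (hpne i), one_mul]
      have hznorm : ∀ i, ‖z i‖^2 = ((probOf P i)⁻¹)^2 * qS i (yh i - y k s i) := by
        intro i
        rw [hz]
        show ‖(probOf P i)⁻¹ • Sm i (yh i - y k s i)‖^2 = _
        rw [norm_smul, mul_pow, ← hSmq i]
        congr 1
        rw [Real.norm_eq_abs, abs_of_pos (inv_pos.mpr (hp i)), sq]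
      calc ∑ R, P R * mF (k+1) (Fin.snoc s R)
          = (1/2) * ∑ R, P R * ‖∑ i ∈ R, Cadj i (z i)‖^2 := by
            rw [Finset.mul_sum]
            exact Finset.sum_congr rfl fun R _ => by rw [hmEq R]; ring
        _ ≤ (1/2) * ∑ i, probOf P i * v i * ‖z i‖^2 := by
            have := hESO z
            linarith
        _ = ∑ i, (v i / probOf P i) * ((1/2) * qS i (yh i - y k s i)) := by
            rw [Finset.mul_sum]
            refine Finset.sum_congr rfl fun i _ => ?_
            rw [hznorm i]
            field_simp [hpne i]
        _ ≤ ∑ i, γ * ((1/2) * qS i (yh i - y k s i)) := by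
            refine Finset.sum_le_sum fun i _ => ?_
            have hq := hqS0 i (yh i - y k s i)
            have := hγi i
            nlinarith
        _ = γ * ∑ R, P R * eF (k+1) (Fin.snoc s R) := by
            rw [heEq, Finset.mul_sum]
  set Φ : ℕ → ℝ := fun k => Ex P k (aF k) + Ex P k (bF k) + Ex P k (dF k)
      - Ex P k (cF k) + Ex P k (eF k) with hΦ
  have hEe0 : ∀ k, 0 ≤ Ex P k (eF k) := fun k => Ex_nonneg P hP0 fun s => by
    simp only [heF]
    refine Finset.sum_nonneg fun i _ => ?_
    have h1 := hqS0 i (DY k s i)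
    have h2 : (0:ℝ) ≤ (probOf P i)⁻¹ := le_of_lt (inv_pos.mpr (hp i))
    exact mul_nonneg h2 (by linarith)
  have R1 : ∀ k, Ex P (k+1) (fun t => Dxf (x (k+1) t))
      + Ex P k (fun s => ∑ i, Dyf i (y k s i)) + Φ (k+1) ≤ Φ k := by
    intro k
    have h := Ex_mono P hP0 (KEY k)
    simp only [Ex_add, Ex_sub] at h
    have hsplit : γ * Ex P k (eF k) ≤ Ex P k (eF k) :=
      mul_le_of_le_one_left (hEe0 k) (le_of_lt hγ1)
    have hMk := hM k
    simp only [hΦ]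
    rw [Ex_step P (aF (k+1)), Ex_step P (bF (k+1)), Ex_step P (dF (k+1)),
      Ex_step P (cF (k+1)), Ex_step P (eF (k+1)), Ex_step P (fun t => Dxf (x (k+1) t))]
    beta_reduce
    linarith [h]
  have R2 : ∀ k, 0 ≤ Φ k := by
    intro k
    have hca := Ex_mono P hP0 (hCa k)
    simp only [Ex_add] at hca
    have hMk := hM k
    have ha0 : 0 ≤ Ex P k (aF k) := Ex_nonneg P hP0 fun s => by
      simp only [haF]
      have := hqT0 (x k s - xs)
      linarith
    have hb0 : 0 ≤ Ex P k (bF k) := Ex_nonneg P hP0 fun s => by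
      simp only [hbF]
      refine Finset.sum_nonneg fun i _ => ?_
      have h1 := hqS0 i (y k s i - ys i)
      have h2 : (0:ℝ) ≤ (probOf P i)⁻¹ := le_of_lt (inv_pos.mpr (hp i))
      exact mul_nonneg h2 (by linarith)
    have hd0 : 0 ≤ Ex P k (dF k) := Ex_nonneg P hP0 fun s => by
      simp only [hdF]
      refine Finset.sum_nonneg fun i _ => ?_
      have h1 := hDyf0 i (y k s i)
      have h2 : (0:ℝ) ≤ (probOf P i)⁻¹ := le_of_lt (inv_pos.mpr (hp i))
      exact mul_nonneg h2 h1
    have he0 := hEe0 k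
    have hsplit : γ * Ex P k (eF k) ≤ Ex P k (eF k) :=
      mul_le_of_le_one_left he0 (le_of_lt hγ1)
    simp only [hΦ]
    have hME : Ex P k (mF k) ≤ Ex P k (eF k) := le_trans hMk hsplit
    linarith [hca, hME, ha0, hb0, hd0, he0]
  have R3 : ∀ K : ℕ, ∑ k ∈ Finset.range K, (Ex P (k+1) (fun t => Dxf (x (k+1) t))
      + Ex P k (fun s => ∑ i, Dyf i (y k s i))) ≤ Φ 0 := by
    have R3' : ∀ K : ℕ, ∑ k ∈ Finset.range K, (Ex P (k+1) (fun t => Dxf (x (k+1) t))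
        + Ex P k (fun s => ∑ i, Dyf i (y k s i))) ≤ Φ 0 - Φ K := by
      intro K
      induction K with
      | zero => simp
      | succ K ih =>
        rw [Finset.sum_range_succ]
        have := R1 K
        linarith
    intro K
    have := R3' K
    have := R2 K
    linarith
  set Df : ∀ k, Hist n k → ℝ := fun k s => Dxf (x k s) + ∑ i, Dyf i (y k s i) with hDf
  set DD : ℕ → ℝ := fun k => Ex P k (Df k) with hDD
  have hDf0 : ∀ k (s : Hist n k), 0 ≤ Df k s := fun k s => by
    simp only [hDf]
    have h1 := hDxf0 (x k s)
    have h2 : (0:ℝ) ≤ ∑ i, Dyf i (y k s i) := Finset.sum_nonneg fun i _ => hDyf0 i (y k s i)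
    linarith
  set M₀ : ℝ := Ex P 0 (fun s => Dxf (x 0 s)) + Φ 0 with hM₀
  have hDDsum : ∀ K : ℕ, ∑ k ∈ Finset.range K, DD k ≤ M₀ := by
    have hG0 : ∀ k, 0 ≤ Ex P k (fun s => Dxf (x k s)) :=
      fun k => Ex_nonneg P hP0 fun s => hDxf0 (x k s)
    have hH0 : ∀ k, 0 ≤ Ex P k (fun s => ∑ i, Dyf i (y k s i)) :=
      fun k => Ex_nonneg P hP0 fun s => Finset.sum_nonneg fun i _ => hDyf0 i (y k s i)
    have hDDsplit : ∀ k, DD k = Ex P k (fun s => Dxf (x k s))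
        + Ex P k (fun s => ∑ i, Dyf i (y k s i)) := by
      intro k
      simp only [hDD, hDf]
      exact Ex_add P _ _
    intro K
    match K with
    | 0 =>
      simp only [Finset.range_zero, Finset.sum_empty, hM₀]
      have := R2 0
      have := hG0 0
      linarith
    | (K+1) =>
      rw [Finset.sum_congr rfl fun k _ => hDDsplit k, Finset.sum_add_distrib,
        Finset.sum_range_succ' (fun k => Ex P k (fun s => Dxf (x k s))) K]
      have h1 : ∑ k ∈ Finset.range K, Ex P (k+1) (fun s => Dxf (x (k+1) s))
          ≤ ∑ k ∈ Finset.range (K+1), Ex P (k+1) (fun s => Dxf (x (k+1) s)) :=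
        Finset.sum_le_sum_of_subset_of_nonneg
          (Finset.range_subset_range.mpr (Nat.le_succ K)) (fun k _ _ => hG0 (k+1))
      have h2 : ∑ k ∈ Finset.range (K+1), Ex P (k+1) (fun s => Dxf (x (k+1) s))
          + ∑ k ∈ Finset.range (K+1), Ex P k (fun s => ∑ i, Dyf i (y k s i))
          ≤ Φ 0 := by
        rw [← Finset.sum_add_distrib]
        exact R3 (K+1)
      simp only [hM₀]
      linarith [hG0 0]
  have hBC : ∀ m : ℕ, ∀ᵐ ω ∂μ, ∀ᶠ k in Filter.atTop,
      ω ∉ {ω' : ℕ → Finset (Fin n) |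
        (1:ℝ)/(m+1) ≤ Df k (fun j => ω' (j : ℕ))} := by
    intro m
    refine MeasureTheory.ae_eventually_notMem (μ := μ) ?_
    have hbound : ∀ k : ℕ, μ {ω' : ℕ → Finset (Fin n) |
        (1:ℝ)/(m+1) ≤ Df k (fun j => ω' (j : ℕ))}
        ≤ ENNReal.ofReal (((m:ℝ)+1) * DD k) := by
      intro k
      set Tb : Finset (Hist n k) :=
        Finset.univ.filter (fun s => (1:ℝ)/(m+1) ≤ Df k s) with hTb
      have hsub : {ω' : ℕ → Finset (Fin n) | (1:ℝ)/(m+1) ≤ Df k (fun j => ω' (j : ℕ))}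
          ⊆ ⋃ s ∈ Tb, {ω' : ℕ → Finset (Fin n) | ∀ j : Fin k, ω' (j : ℕ) = s j} := by
        intro ω' hω'
        simp only [Set.mem_setOf_eq] at hω'
        have hmem : (fun j : Fin k => ω' (j : ℕ)) ∈ Tb := by
          rw [hTb]
          exact Finset.mem_filter.mpr ⟨Finset.mem_univ _, hω'⟩
        exact Set.mem_biUnion (Finset.mem_coe.mpr hmem) (fun j => rfl)
      have hcyl : ∀ s : Hist n k,
          μ {ω' : ℕ → Finset (Fin n) | ∀ j : Fin k, ω' (j : ℕ) = s j}
            = ENNReal.ofReal (histProb P s) := by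
        intro s
        rw [← hμ k s, ENNReal.ofReal_toReal (measure_ne_top μ _)]
      calc μ {ω' : ℕ → Finset (Fin n) | (1:ℝ)/(m+1) ≤ Df k (fun j => ω' (j : ℕ))}
          ≤ μ (⋃ s ∈ Tb, {ω' : ℕ → Finset (Fin n) | ∀ j : Fin k, ω' (j : ℕ) = s j}) :=
            measure_mono hsub
        _ ≤ ∑ s ∈ Tb, μ {ω' : ℕ → Finset (Fin n) | ∀ j : Fin k, ω' (j : ℕ) = s j} :=
            measure_biUnion_finset_le Tb _
        _ = ∑ s ∈ Tb, ENNReal.ofReal (histProb P s) :=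
            Finset.sum_congr rfl fun s _ => hcyl s
        _ = ENNReal.ofReal (∑ s ∈ Tb, histProb P s) :=
            (ENNReal.ofReal_sum_of_nonneg fun s _ => histProb_nonneg P hP0 s).symm
        _ ≤ ENNReal.ofReal (((m:ℝ)+1) * DD k) := by
            refine ENNReal.ofReal_le_ofReal ?_
            have hstep : ∀ s ∈ Tb, histProb P s ≤ ((m:ℝ)+1) * (histProb P s * Df k s) := by
              intro s hs
              rw [hTb] at hs
              have hD := (Finset.mem_filter.mp hs).2
              have hpr := histProb_nonneg P hP0 s
              have hm1 : (0:ℝ) < (m:ℝ)+1 := by positivity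
              have h1 : (1:ℝ) ≤ ((m:ℝ)+1) * Df k s := by
                rw [div_le_iff₀ hm1] at hD
                linarith
              nlinarith
            calc ∑ s ∈ Tb, histProb P s
                ≤ ∑ s ∈ Tb, ((m:ℝ)+1) * (histProb P s * Df k s) :=
                  Finset.sum_le_sum hstep
              _ ≤ ∑ s : Hist n k, ((m:ℝ)+1) * (histProb P s * Df k s) := by
                  refine Finset.sum_le_sum_of_subset_of_nonneg (Finset.subset_univ _) ?_
                  intro s _ _
                  have := histProb_nonneg P hP0 s
                  have := hDf0 k s
                  positivity
              _ = ((m:ℝ)+1) * DD k := by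
                  rw [hDD, ← Finset.mul_sum]
                  rfl
    have htsum : ∑' k : ℕ, μ {ω' : ℕ → Finset (Fin n) |
        (1:ℝ)/(m+1) ≤ Df k (fun j => ω' (j : ℕ))} ≠ ⊤ := by
      have h1 : ∑' k : ℕ, μ {ω' : ℕ → Finset (Fin n) |
          (1:ℝ)/(m+1) ≤ Df k (fun j => ω' (j : ℕ))}
          ≤ ∑' k : ℕ, ENNReal.ofReal (((m:ℝ)+1) * DD k) :=
        ENNReal.tsum_le_tsum hbound
      have h2 : ∑' k : ℕ, ENNReal.ofReal (((m:ℝ)+1) * DD k)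
          ≤ ENNReal.ofReal (((m:ℝ)+1) * M₀) := by
        refine Summable.tsum_le_of_sum_range_le ENNReal.summable ?_
        intro K
        have h3 : ∑ k ∈ Finset.range K, ENNReal.ofReal (((m:ℝ)+1) * DD k)
            = ENNReal.ofReal (∑ k ∈ Finset.range K, ((m:ℝ)+1) * DD k) := by
          refine (ENNReal.ofReal_sum_of_nonneg ?_).symm
          intro k _
          have hDk : 0 ≤ DD k := by
            rw [hDD]
            exact Ex_nonneg P hP0 (hDf0 k)
          positivity
        rw [h3]
        refine ENNReal.ofReal_le_ofReal ?_
        rw [← Finset.mul_sum]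
        have := hDDsum K
        nlinarith [Nat.cast_nonneg (α := ℝ) m]
      exact ne_top_of_le_ne_top (by simp) (h1.trans h2)
    exact htsum
  have hae : ∀ᵐ ω ∂μ, ∀ m : ℕ, ∀ᶠ k in Filter.atTop,
      ω ∉ {ω' : ℕ → Finset (Fin n) | (1:ℝ)/(m+1) ≤ Df k (fun j => ω' (j : ℕ))} :=
    (MeasureTheory.ae_all_iff).mpr hBC
  filter_upwards [hae] with ω hω
  have key : Filter.Tendsto (fun k => Df k (fun j => ω (j : ℕ))) Filter.atTop (nhds 0) :=
    by
    rw [Metric.tendsto_atTop]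
    intro ε hε
    obtain ⟨m, hm⟩ := exists_nat_one_div_lt hε
    have h1 := hω m
    rw [Filter.eventually_atTop] at h1
    obtain ⟨N, hN⟩ := h1
    refine ⟨N, fun k hk => ?_⟩
    have h2 := hN k hk
    simp only [Set.mem_setOf_eq, not_le] at h2
    have h3 : 0 ≤ Df k (fun j => ω (j : ℕ)) := hDf0 k _
    rw [Real.dist_eq, sub_zero, abs_of_nonneg h3]
    exact lt_trans h2 hm
  simpa only [hDf, hDxf, hDyf] using key
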